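/- Let U, V be in SO(3) and S = diag(s1, s2, s3) with s1 >= s2 >= |s3| and s2 + s3 > 0. Set Ltilde = U S V^T, Rhat = U V^T, and B = trace(Rhat^T * Ltilde) * I_3 - Rhat^T * Ltilde. Then det(B) = (s2 + s3)(s1 + s3)(s1 + s2) > 0; in particular B is invertible. (Proposition 7.) -/
import Mathlib


open Matrix

noncomputable section

/-- `SO3 R` means `R` is a rotation matrix: `Rᵀ R = I₃` and `det R = 1`. -/
def SO3 (R : Matrix (Fin 3) (Fin 3) ℝ) : Prop :=
  Rᵀ * R = 1 ∧ R.det = 1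

/-- Proposition 7: with `L̃ = U S Vᵀ`, `R̂ = U Vᵀ` (proper SVD, `s1 ≥ s2 ≥ |s3|`,
`s2 + s3 > 0`) and `B = tr(R̂ᵀ L̃) I₃ - R̂ᵀ L̃`, one has
`det B = (s2+s3)(s1+s3)(s1+s2) > 0`; in particular `B` is invertible. -/
theorem stmt12 (U V : Matrix (Fin 3) (Fin 3) ℝ) (hU : SO3 U) (hV : SO3 V)
    (s : Fin 3 → ℝ) (h12 : s 1 ≤ s 0) (h23 : |s 2| ≤ s 1) (hpos : 0 < s 1 + s 2)
    (Ltilde Rhat B : Matrix (Fin 3) (Fin 3) ℝ)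
    (hL : Ltilde = U * Matrix.diagonal s * Vᵀ) (hR : Rhat = U * Vᵀ)
    (hB : B = Matrix.trace (Rhatᵀ * Ltilde) • (1 : Matrix (Fin 3) (Fin 3) ℝ) -
      Rhatᵀ * Ltilde) :
    B.det = (s 1 + s 2) * (s 0 + s 2) * (s 0 + s 1) ∧ 0 < B.det ∧ IsUnit B := by
  obtain ⟨hU1, hUdet⟩ := hU
  obtain ⟨hV1, hVdet⟩ := hV
  have hM : Rhatᵀ * Ltilde = V * Matrix.diagonal s * Vᵀ := by
    rw [hR, hL, transpose_mul, transpose_transpose]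
    calc Vᵀᵀ * Uᵀ * (U * Matrix.diagonal s * Vᵀ)
        = V * (Uᵀ * U) * Matrix.diagonal s * Vᵀ := by
          rw [transpose_transpose]; simp only [mul_assoc]
      _ = V * Matrix.diagonal s * Vᵀ := by rw [hU1, mul_one]
  have htr : Matrix.trace (Rhatᵀ * Ltilde) = s 0 + s 1 + s 2 := by
    rw [hM, Matrix.trace_mul_cycle, hV1, one_mul, Matrix.trace_diagonal,
      Fin.sum_univ_three]
  set t : ℝ := s 0 + s 1 + s 2 with ht
  have hBfact : B = V * Matrix.diagonal (fun i => t - s i) * Vᵀ := by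
    have hd : Matrix.diagonal (fun i => t - s i)
        = t • (1 : Matrix (Fin 3) (Fin 3) ℝ) - Matrix.diagonal s := by
      ext i j
      by_cases h : i = j <;>
        simp [Matrix.diagonal, Matrix.one_apply, h, Matrix.sub_apply]
    rw [hB, htr, hM, hd]
    have hVV : V * Vᵀ = 1 := mul_eq_one_comm.mp hV1
    rw [Matrix.mul_sub, Matrix.sub_mul, Matrix.mul_smul, mul_one,
      Matrix.smul_mul, hVV]
  have hdet : B.det = (s 1 + s 2) * (s 0 + s 2) * (s 0 + s 1) := by
    rw [hBfact, Matrix.det_mul, Matrix.det_mul, hVdet, Matrix.det_transpose,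
      hVdet, one_mul, mul_one, Matrix.det_diagonal, Fin.prod_univ_three, ht]
    ring
  have h2 : s 2 ≤ s 1 := (le_abs_self _).trans h23
  have hpd : 0 < B.det := by
    rw [hdet]
    have : 0 < s 0 + s 2 := by linarith
    have : 0 < s 0 + s 1 := by linarith
    positivity
  exact ⟨hdet, hpd, isUnit_iff_isUnit_det B |>.mpr (isUnit_iff_ne_zero.mpr (ne_of_gt hpd))⟩
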